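/- Let n ≥ 1 be an integer and L > 0. There exist constants C > 0 and ε₀ > 0, depending only on n and L, with the following property: for any real numbers ν₁, …, ν_n with ν₁ = max_j ν_j, any continuous B : [0,L] → M_n(ℝ) with ε := sup_{s ∈ [0,L], i,j} |B(s)_{ij}| ≤ ε₀, and any differentiable Φ : [0,L] → M_n(ℝ) with Φ(0) = Id and Φ′(s) = (diag(ν₁,…,ν_n) + B(s))·Φ(s) for all s ∈ [0,L], one has |Φ(s)_{ij} − δ_{ij} e^{ν_j s}| ≤ C · ε · e^{ν₁ s} for all s ∈ [0,L] and all 1 ≤ i, j ≤ n, where δ_{ij} is the Kronecker delta. -/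

import Mathlib

open Set
open Topology MeasureTheory

attribute [local instance] Matrix.linftyOpNormedAddCommGroup Matrix.linftyOpNormedRing
  Matrix.linftyOpNormedAlgebra

/-- Entrywise estimate for the perturbed diagonal linear ODE arising in the WKB analysis:
there are `C > 0`, `ε₀ > 0` depending only on `n` and `L` such that for any `ν₁,…,ν_n` with
`ν₁ = max_j ν_j` (here `ν 0` plays the role of `ν₁`), any continuous `B` with
`|B(s)_{ij}| ≤ ε ≤ ε₀`, and any `Φ` with `Φ(0) = Id` and
`Φ′(s) = (diag(ν₁,…,ν_n) + B(s))Φ(s)`, one has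
`|Φ(s)_{ij} − δ_{ij} e^{ν_j s}| ≤ C ε e^{ν₁ s}`. -/
theorem statement18 (n : ℕ) [NeZero n] (hn : 1 ≤ n) (L : ℝ) (hL : 0 < L) :
    ∃ C : ℝ, 0 < C ∧ ∃ ε₀ : ℝ, 0 < ε₀ ∧
      ∀ ν : Fin n → ℝ, (∀ j, ν j ≤ ν 0) →
      ∀ B : ℝ → Matrix (Fin n) (Fin n) ℝ, ContinuousOn B (Icc 0 L) →
      ∀ ε : ℝ, 0 ≤ ε → ε ≤ ε₀ →
      (∀ s ∈ Icc (0 : ℝ) L, ∀ i j : Fin n, |B s i j| ≤ ε) →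
      ∀ Φ : ℝ → Matrix (Fin n) (Fin n) ℝ, Φ 0 = 1 →
      (∀ s ∈ Icc (0 : ℝ) L,
        HasDerivWithinAt Φ ((Matrix.diagonal ν + B s) * Φ s) (Icc 0 L) s) →
      ∀ s ∈ Icc (0 : ℝ) L, ∀ i j : Fin n,
        |Φ s i j - (if i = j then Real.exp (ν j * s) else 0)| ≤ C * ε * Real.exp (ν 0 * s) := by
  have hn' : (0:ℝ) < n := by positivity
  refine ⟨Real.exp 1 * L, by positivity, ((n : ℝ) * L)⁻¹, by positivity, ?_⟩
  intro ν hν B hB ε hε hεε₀ hBε Φ hΦ0 hΦ' s hs i j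
  -- entry evaluation as a continuous linear map
  have hent : ∀ (a b : Fin n), ∃ F : Matrix (Fin n) (Fin n) ℝ →L[ℝ] ℝ,
      ∀ A : Matrix (Fin n) (Fin n) ℝ, F A = A a b := fun a b =>
    ⟨LinearMap.toContinuousLinearMap (Matrix.entryLinearMap ℝ ℝ a b), fun _ => rfl⟩
  choose F hF using hent
  have hΦc : ContinuousOn Φ (Icc 0 L) := fun t ht => (hΦ' t ht).continuousWithinAt
  have hΦe : ∀ (a b : Fin n), ContinuousOn (fun t => Φ t a b) (Icc 0 L) := by
    intro a b
    have := (F a b).continuous.comp_continuousOn hΦc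
    simpa [Function.comp_def, hF] using this
  have hBe : ∀ (a b : Fin n), ContinuousOn (fun t => B t a b) (Icc 0 L) := by
    intro a b
    have := (F a b).continuous.comp_continuousOn hB
    simpa [Function.comp_def, hF] using this
  set r : Fin n → ℝ → ℝ :=
    fun a t => Φ t a j - (if a = j then Real.exp (ν j * t) else 0) with hrdef
  set g : Fin n → ℝ → ℝ := fun a t => ∑ k, B t a k * Φ t k j with hgdef
  have hrc : ∀ a, ContinuousOn (r a) (Icc 0 L) := by
    intro a
    apply (hΦe a j).sub
    by_cases h : a = j <;> simp [h] <;> fun_prop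
  have hgc : ∀ a, ContinuousOn (g a) (Icc 0 L) := fun a =>
    continuousOn_finset_sum _ fun k _ => (hBe a k).mul (hΦe k j)
  -- derivative of entries
  have hder : ∀ a, ∀ t ∈ Icc (0:ℝ) L, HasDerivWithinAt (fun u => Φ u a j)
      (ν a * Φ t a j + g a t) (Icc 0 L) t := by
    intro a t ht
    have h1 := (F a j).hasFDerivAt.comp_hasDerivWithinAt t (hΦ' t ht)
    have h2 : ∀ u, F a j (Φ u) = Φ u a j := fun u => hF a j (Φ u)
    simp only [Function.comp_def, h2, hF] at h1
    refine h1.congr_deriv ?_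
    refine (hF a j _).trans ?_
    rw [Matrix.add_mul, Matrix.add_apply, Matrix.diagonal_mul, Matrix.mul_apply]
  -- derivative of r
  have hrd : ∀ a, ∀ t ∈ Icc (0:ℝ) L,
      HasDerivWithinAt (r a) (ν a * r a t + g a t) (Icc 0 L) t := by
    intro a t ht
    have h2 : HasDerivWithinAt (fun u => if a = j then Real.exp (ν j * u) else 0)
        (ν a * (if a = j then Real.exp (ν j * t) else 0)) (Icc 0 L) t := by
      by_cases h : a = j
      · subst h
        simp only [if_pos rfl]
        simpa [mul_comm] using (((hasDerivAt_id t).const_mul (ν a)).exp).hasDerivWithinAt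
      · simpa [h] using (hasDerivWithinAt_const t (Icc (0:ℝ) L) (0:ℝ))
    have h3 := (hder a t ht).sub h2
    refine h3.congr_deriv ?_
    simp only [hrdef]
    ring
  -- derivative of p a = exp(-ν a t) * r a t
  have hpd : ∀ a, ∀ t ∈ Icc (0:ℝ) L,
      HasDerivWithinAt (fun u => Real.exp (-ν a * u) * r a u)
      (Real.exp (-ν a * t) * g a t) (Icc 0 L) t := by
    intro a t ht
    have he : HasDerivAt (fun u => Real.exp (-ν a * u)) (-ν a * Real.exp (-ν a * t)) t := by
      simpa [mul_comm] using ((hasDerivAt_id t).const_mul (-ν a)).exp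
    have := he.hasDerivWithinAt.mul (hrd a t ht)
    refine this.congr_deriv ?_
    ring
  -- FTC / variation of constants
  have key : ∀ s' ∈ Icc (0:ℝ) L, ∀ a,
      Real.exp (-ν a * s') * r a s' = ∫ t in (0:ℝ)..s', Real.exp (-ν a * t) * g a t := by
    intro s' hs' a
    have hsub : Icc (0:ℝ) s' ⊆ Icc 0 L := Icc_subset_Icc le_rfl hs'.2
    have hcont : ContinuousOn (fun u => Real.exp (-ν a * u) * r a u) (Icc 0 s') :=
      ((Real.continuous_exp.comp (continuous_const.mul continuous_id)).comp
        continuous_id).continuousOn.mul ((hrc a).mono hsub)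
    have hderiv : ∀ x ∈ Ioo (0:ℝ) s', HasDerivWithinAt (fun u => Real.exp (-ν a * u) * r a u)
        (Real.exp (-ν a * x) * g a x) (Ioi x) x := by
      intro x hx
      have hxL : x ∈ Icc (0:ℝ) L := ⟨hx.1.le, hx.2.le.trans hs'.2⟩
      refine (hpd a x hxL).mono_of_mem_nhdsWithin ?_
      exact Filter.mem_of_superset (Ioc_mem_nhdsGT_of_mem ⟨le_rfl, lt_of_lt_of_le hx.2 hs'.2⟩)
        (Ioc_subset_Icc_self.trans (Icc_subset_Icc hxL.1 le_rfl))
    have hint : IntervalIntegrable (fun t => Real.exp (-ν a * t) * g a t) MeasureTheory.volume 0 s' := by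
      apply ContinuousOn.intervalIntegrable
      rw [uIcc_of_le hs'.1]
      exact ((Real.continuous_exp.comp (continuous_const.mul continuous_id)).comp
        continuous_id).continuousOn.mul ((hgc a).mono hsub)
    have := intervalIntegral.integral_eq_sub_of_hasDeriv_right_of_le hs'.1 hcont hderiv hint
    have h0 : r a 0 = 0 := by
      simp [hrdef, hΦ0, Matrix.one_apply]
    rw [this, h0]
    ring
  -- v and w
  set v : ℝ → ℝ := fun t => ∑ k, |r k t| * Real.exp (-ν 0 * t) with hvdef
  set w : ℝ → ℝ := fun t => ∫ u in (0:ℝ)..t, (v u + 1) with hwdef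
  have hvc : ContinuousOn v (Icc 0 L) :=
    continuousOn_finset_sum _ fun k _ => (hrc k).abs.mul
      ((Real.continuous_exp.comp (continuous_const.mul continuous_id)).continuousOn)
  have hv0 : ∀ t, 0 ≤ v t := fun t =>
    Finset.sum_nonneg fun k _ => mul_nonneg (abs_nonneg _) (Real.exp_pos _).le
  have hvint : ∀ s' ∈ Icc (0:ℝ) L,
      IntervalIntegrable (fun u => v u + 1) MeasureTheory.volume 0 s' := by
    intro s' hs'
    apply ContinuousOn.intervalIntegrable
    rw [uIcc_of_le hs'.1]
    exact ((hvc.mono (Icc_subset_Icc le_rfl hs'.2)).add continuousOn_const)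
  have hw0 : ∀ s' ∈ Icc (0:ℝ) L, 0 ≤ w s' := by
    intro s' hs'
    apply intervalIntegral.integral_nonneg hs'.1
    intro u _; positivity
  -- the basic integral inequality
  have star : ∀ s' ∈ Icc (0:ℝ) L, ∀ a, |r a s'| * Real.exp (-ν 0 * s') ≤ ε * w s' := by
    intro s' hs' a
    have hsub : Icc (0:ℝ) s' ⊆ Icc 0 L := Icc_subset_Icc le_rfl hs'.2
    have hra : r a s' = Real.exp (ν a * s') * (∫ t in (0:ℝ)..s', Real.exp (-ν a * t) * g a t) := by
      have hk := key s' hs' a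
      rw [← hk, ← mul_assoc, ← Real.exp_add]
      simp
    have h1 : |r a s'| * Real.exp (-ν 0 * s')
        ≤ (Real.exp (ν a * s') * Real.exp (-ν 0 * s')) *
          ∫ t in (0:ℝ)..s', |Real.exp (-ν a * t) * g a t| := by
      rw [hra, abs_mul, abs_of_pos (Real.exp_pos _), mul_comm (Real.exp (ν a * s') * _)]
      rw [mul_comm (Real.exp (ν a * s'))  (Real.exp (-ν 0 * s'))]
      rw [← mul_assoc]
      apply mul_le_mul_of_nonneg_left _ (by positivity)
      exact intervalIntegral.norm_integral_le_integral_norm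
        (f := fun t => Real.exp (-ν a * t) * g a t) (μ := MeasureTheory.volume) hs'.1
    have h2 : (Real.exp (ν a * s') * Real.exp (-ν 0 * s')) *
          (∫ t in (0:ℝ)..s', |Real.exp (-ν a * t) * g a t|)
        = ∫ t in (0:ℝ)..s', (Real.exp (ν a * s') * Real.exp (-ν 0 * s')) *
            |Real.exp (-ν a * t) * g a t| := by
      rw [← intervalIntegral.integral_const_mul]
    have h3 : ∀ t ∈ Icc (0:ℝ) s',
        (Real.exp (ν a * s') * Real.exp (-ν 0 * s')) * |Real.exp (-ν a * t) * g a t|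
          ≤ ε * (v t + 1) := by
      intro t ht
      have htL : t ∈ Icc (0:ℝ) L := hsub ht
      rw [abs_mul, abs_of_pos (Real.exp_pos _), ← Real.exp_add, ← mul_assoc, ← Real.exp_add]
      have hfac : Real.exp (ν a * s' + -ν 0 * s' + -ν a * t) ≤ Real.exp (-ν 0 * t) := by
        apply Real.exp_le_exp.2
        nlinarith [hν a, ht.1, ht.2, sub_nonneg.2 ht.2]
      have hgb : |g a t| ≤ ε * (∑ k, |Φ t k j|) := by
        calc |g a t| ≤ ∑ k, |B t a k * Φ t k j| := Finset.abs_sum_le_sum_abs _ _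
          _ ≤ ∑ k, ε * |Φ t k j| := by
              apply Finset.sum_le_sum
              intro k _
              rw [abs_mul]
              exact mul_le_mul_of_nonneg_right (hBε t htL a k) (abs_nonneg _)
          _ = ε * ∑ k, |Φ t k j| := by rw [Finset.mul_sum]
      have hΦb : (∑ k, |Φ t k j|) * Real.exp (-ν 0 * t) ≤ v t + 1 := by
        have hone : ∀ k : Fin n, |Φ t k j| ≤ |r k t| + (if k = j then Real.exp (ν j * t) else 0) := by
          intro k
          have : Φ t k j = r k t + (if k = j then Real.exp (ν j * t) else 0) := by
            simp [hrdef]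
          rw [this]
          refine (abs_add_le _ _).trans ?_
          gcongr
          by_cases h : k = j <;> simp [h, abs_of_pos (Real.exp_pos _)]
        calc (∑ k, |Φ t k j|) * Real.exp (-ν 0 * t)
            ≤ (∑ k, (|r k t| + (if k = j then Real.exp (ν j * t) else 0))) * Real.exp (-ν 0 * t) := by
              apply mul_le_mul_of_nonneg_right _ (Real.exp_pos _).le
              exact Finset.sum_le_sum fun k _ => hone k
          _ = v t + Real.exp (ν j * t) * Real.exp (-ν 0 * t) := by
              rw [Finset.sum_add_distrib, add_mul, Finset.sum_mul]
              congr 1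
              simp
          _ ≤ v t + 1 := by
              rw [← Real.exp_add]
              have : ν j * t + -ν 0 * t ≤ 0 := by nlinarith [hν j, htL.1]
              gcongr
              exact Real.exp_le_one_iff.2 this
        -- end calc
      calc Real.exp (ν a * s' + -ν 0 * s' + -ν a * t) * |g a t|
          ≤ Real.exp (-ν 0 * t) * |g a t| :=
            mul_le_mul_of_nonneg_right hfac (abs_nonneg _)
        _ ≤ Real.exp (-ν 0 * t) * (ε * (∑ k, |Φ t k j|)) :=
            mul_le_mul_of_nonneg_left hgb (Real.exp_pos _).le
        _ = ε * ((∑ k, |Φ t k j|) * Real.exp (-ν 0 * t)) := by ring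
        _ ≤ ε * (v t + 1) := mul_le_mul_of_nonneg_left hΦb hε
    have h4 : (∫ t in (0:ℝ)..s', (Real.exp (ν a * s') * Real.exp (-ν 0 * s')) *
            |Real.exp (-ν a * t) * g a t|) ≤ ∫ t in (0:ℝ)..s', ε * (v t + 1) := by
      apply intervalIntegral.integral_mono_on hs'.1 _ ((hvint s' hs').const_mul ε) h3
      · apply ContinuousOn.intervalIntegrable
        rw [uIcc_of_le hs'.1]
        apply continuousOn_const.mul
        apply ContinuousOn.abs
        exact ((Real.continuous_exp.comp (continuous_const.mul continuous_id)).continuousOn).mul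
          ((hgc a).mono hsub)
    calc |r a s'| * Real.exp (-ν 0 * s') ≤ _ := h1
      _ = _ := h2
      _ ≤ ∫ t in (0:ℝ)..s', ε * (v t + 1) := h4
      _ = ε * w s' := by rw [intervalIntegral.integral_const_mul]
  -- v ≤ (1/L) w
  have hvw : ∀ s' ∈ Icc (0:ℝ) L, v s' ≤ L⁻¹ * w s' := by
    intro s' hs'
    have : v s' ≤ (n : ℝ) * (ε * w s') := by
      calc v s' = ∑ k, |r k s'| * Real.exp (-ν 0 * s') := rfl
        _ ≤ ∑ _k : Fin n, ε * w s' := Finset.sum_le_sum fun k _ => star s' hs' k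
        _ = n * (ε * w s') := by simp [Finset.sum_const, nsmul_eq_mul]
    refine this.trans ?_
    rw [← mul_assoc]
    apply mul_le_mul_of_nonneg_right _ (hw0 s' hs')
    calc (n : ℝ) * ε ≤ n * ((n : ℝ) * L)⁻¹ := by
          apply mul_le_mul_of_nonneg_left hεε₀ hn'.le
      _ = L⁻¹ := by
          rw [mul_inv]
          rw [← mul_assoc, mul_inv_cancel₀ (ne_of_gt hn')]
          ring
  -- Gronwall for w
  have hwc : ContinuousOn w (Icc 0 L) := by
    rw [show Icc (0:ℝ) L = uIcc 0 L from (uIcc_of_le hL.le).symm]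
    apply intervalIntegral.continuousOn_primitive_interval
    rw [uIcc_of_le hL.le]
    exact (hvc.add continuousOn_const).integrableOn_compact isCompact_Icc
  have hwd : ∀ x ∈ Ico (0:ℝ) L, HasDerivWithinAt w (v x + 1) (Ici x) x := by
    intro x hx
    have hxI : x ∈ Icc (0:ℝ) L := ⟨hx.1, hx.2.le⟩
    have hmem : Icc (0:ℝ) L ∈ 𝓝[>] x :=
      Filter.mem_of_superset (Ioc_mem_nhdsGT_of_mem ⟨le_rfl, hx.2⟩)
        (Ioc_subset_Icc_self.trans (Icc_subset_Icc hx.1 le_rfl))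
    have hmeas : StronglyMeasurableAtFilter (fun u => v u + 1) (𝓝[>] x) MeasureTheory.volume :=
      ⟨Icc 0 L, hmem, ((hvc.add continuousOn_const).aestronglyMeasurable measurableSet_Icc)⟩
    have hcw : ContinuousWithinAt (fun u => v u + 1) (Ioi x) x := by
      refine ContinuousWithinAt.mono_of_mem_nhdsWithin ?_ hmem
      exact ((hvc.add continuousOn_const) x hxI)
    exact intervalIntegral.integral_hasDerivWithinAt_right (hvint x hxI) hmeas hcw
  have hgron := norm_le_gronwallBound_of_norm_deriv_right_le (δ := 0) (K := L⁻¹) (ε := 1)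
    hwc hwd (by simp [hwdef]) ?_ s hs
  swap
  · intro x hx
    have hxI : x ∈ Icc (0:ℝ) L := ⟨hx.1, hx.2.le⟩
    rw [Real.norm_eq_abs, Real.norm_eq_abs, abs_of_nonneg (by positivity : (0:ℝ) ≤ v x + 1),
      abs_of_nonneg (hw0 x hxI)]
    linarith [hvw x hxI]
  -- final bound
  have hwb : w s ≤ Real.exp 1 * L := by
    have hKL : L⁻¹ ≠ 0 := inv_ne_zero hL.ne'
    rw [Real.norm_eq_abs, abs_of_nonneg (hw0 s hs)] at hgron
    rw [gronwallBound_of_K_ne_0 hKL] at hgron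
    have hsL : L⁻¹ * (s - 0) ≤ 1 := by
      rw [sub_zero]
      rw [inv_mul_le_iff₀ hL, mul_one]
      exact hs.2
    have : Real.exp (L⁻¹ * (s - 0)) ≤ Real.exp 1 := Real.exp_le_exp.2 hsL
    calc w s ≤ 0 * Real.exp (L⁻¹ * (s - 0)) + 1 / L⁻¹ * (Real.exp (L⁻¹ * (s - 0)) - 1) := hgron
      _ = L * (Real.exp (L⁻¹ * (s - 0)) - 1) := by rw [one_div, inv_inv]; ring
      _ ≤ L * (Real.exp 1 - 1) := by gcongr
      _ ≤ Real.exp 1 * L := by nlinarith [Real.exp_pos 1]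
  have hfin := star s hs i
  have hmul : |r i s| ≤ ε * w s * Real.exp (ν 0 * s) := by
    have h := mul_le_mul_of_nonneg_right hfin (Real.exp_pos (ν 0 * s)).le
    rw [mul_assoc, ← Real.exp_add] at h
    simpa using h
  calc |Φ s i j - (if i = j then Real.exp (ν j * s) else 0)| = |r i s| := rfl
    _ ≤ ε * w s * Real.exp (ν 0 * s) := hmul
    _ ≤ ε * (Real.exp 1 * L) * Real.exp (ν 0 * s) := by
        gcongr
    _ = Real.exp 1 * L * ε * Real.exp (ν 0 * s) := by ring
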